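/- Let q be a prime power and let ℓ be an odd prime that does not divide q(q² − 1). Then the Sylow ℓ-subgroups of SL₄(𝔽_q) are cyclic. -/

import Mathlib

/-!
If `ℓ` is an odd prime not dividing `q(q² − 1)`, then the Sylow `ℓ`-subgroups of
`SL₄(𝔽_q)` are cyclic.
-/

open Polynomial Matrix

lemma my_card_splittingField (F : Type) [Field F] [Fintype F] {p s d : ℕ} [Fact p.Prime]
    [CharP F p] (hd : d ≠ 0) (hs : p ^ s = Fintype.card F ^ d) :
    Nat.card (SplittingField (X ^ p ^ s - X : F[X])) = Fintype.card F ^ d := by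
  classical
  set K := SplittingField (X ^ p ^ s - X : F[X]) with hK
  haveI : CharP K p := charP_of_injective_algebraMap (algebraMap F K).injective p
  haveI : Fintype K := Fintype.ofFinite K
  have hs0 : s ≠ 0 := by
    rintro rfl
    have h2 : 1 < Fintype.card F ^ d := Nat.one_lt_pow hd Fintype.one_lt_card
    simp at hs
    omega
  have hp : 1 < p := (Fact.out : p.Prime).one_lt
  set g_poly := (X ^ p ^ s - X : F[X]) with hg
  have aux : g_poly ≠ 0 := FiniteField.X_pow_card_pow_sub_X_ne_zero _ hs0 hp
  have key : Fintype.card ((X ^ p ^ s - X : F[X]).rootSet K) = (X ^ p ^ s - X : F[X]).natDegree :=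
    card_rootSet_eq_natDegree (galois_poly_separable p _ (dvd_pow (dvd_refl p) hs0))
      (SplittingField.splits (X ^ p ^ s - X : F[X]))
  have nat_degree_eq : (X ^ p ^ s - X : F[X]).natDegree = p ^ s :=
    FiniteField.X_pow_card_pow_sub_X_natDegree_eq _ hs0 hp
  rw [nat_degree_eq] at key
  suffices hU : (X ^ p ^ s - X : F[X]).rootSet K = Set.univ by
    rw [← Nat.card_eq_fintype_card] at key
    rw [← hs, ← key, hU]
    exact (Nat.card_congr (Equiv.Set.univ K)).symm
  rw [Set.eq_univ_iff_forall]
  suffices ∀ (x) (_ : x ∈ (⊤ : Subalgebra F K)),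
      x ∈ (X ^ p ^ s - X : F[X]).rootSet K by simpa
  rw [← SplittingField.adjoin_rootSet]
  simp_rw [Algebra.mem_adjoin_iff]
  intro x hx
  refine Subring.closure_induction ?_ ?_ ?_ ?_ ?_ ?_ hx <;> simp_rw [mem_rootSet_of_ne (p := (X ^ p ^ s - X : F[X])) aux]
  · rintro x (⟨r, rfl⟩ | hx)
    · simp only [g_poly, map_sub, map_pow, aeval_X]
      have hr : r ^ p ^ s = r := by rw [hs]; exact FiniteField.pow_card_pow d r
      rw [← map_pow, hr, sub_self]
    · rwa [mem_rootSet_of_ne (p := (X ^ p ^ s - X : F[X])) aux] at hx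
  · rw [← coeff_zero_eq_aeval_zero']
    simp only [g_poly, coeff_X_pow, coeff_X_zero, sub_zero, _root_.map_eq_zero, ite_eq_right_iff,
      one_ne_zero, coeff_sub]
    intro hn
    exact Nat.not_lt_zero 1 (eq_zero_of_pow_eq_zero hn.symm ▸ hp)
  · simp [g_poly]
  · simp only [g_poly, aeval_X_pow, aeval_X, map_sub, add_pow_char_pow, sub_eq_zero]
    intro x y _ _ hx hy
    rw [hx, hy]
  · intro x _ hx
    simp only [g_poly, sub_eq_zero, aeval_X_pow, aeval_X, map_sub, sub_neg_eq_add] at *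
    rw [neg_pow, hx, neg_one_pow_char_pow]
    ring
  · simp only [g_poly, aeval_X_pow, aeval_X, map_sub, mul_pow, sub_eq_zero]
    intro x y _ _ hx hy
    rw [hx, hy]

set_option maxHeartbeats 1000000 in
lemma exists_SL4_elem (F : Type) [Field F] [Fintype F] [DecidableEq F] {d m : ℕ}
    (hd0 : d ≠ 0) (hd4 : d ≤ 4) (hm : m ∣ Fintype.card F ^ d - 1)
    (hcop : Nat.Coprime m (Fintype.card F - 1)) :
    ∃ M : SpecialLinearGroup (Fin 4) F, orderOf M = m := by
  classical
  set q := Fintype.card F with hq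
  set p := ringChar F with hp
  haveI : CharP F p := ringChar.charP F
  obtain ⟨n, hpp, hcard⟩ := FiniteField.card F p
  haveI : Fact p.Prime := ⟨hpp⟩
  have hs : p ^ ((n : ℕ) * d) = q ^ d := by rw [pow_mul, ← hcard]
  set K := Polynomial.SplittingField
    (Polynomial.X ^ p ^ ((n : ℕ) * d) - Polynomial.X : Polynomial F) with hK
  have hcardK : Nat.card K = q ^ d := my_card_splittingField F hd0 hs
  have hq1 : 1 < q := Fintype.one_lt_card
  have hqd1 : 1 < q ^ d := Nat.one_lt_pow hd0 hq1
  haveI : Finite K := Nat.finite_of_card_ne_zero (by omega)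
  haveI : Fintype K := Fintype.ofFinite K
  have hfr : Module.finrank F K = d := by
    have h1 : Fintype.card K = q ^ Module.finrank F K := Module.card_eq_pow_finrank
    rw [← Nat.card_eq_fintype_card, hcardK] at h1
    exact (Nat.pow_right_injective hq1 h1.symm)
  have b : Module.Basis (Fin d) F K := (Module.finBasis F K).reindex (finCongr hfr)
  -- generator of Kˣ
  obtain ⟨x, hx⟩ := IsCyclic.exists_generator (α := Kˣ)
  have hox : orderOf x = q ^ d - 1 := by
    rw [orderOf_eq_card_of_forall_mem_zpowers hx, Nat.card_eq_fintype_card,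
      Fintype.card_units, ← Nat.card_eq_fintype_card, hcardK]
  have hmdvd : m ∣ orderOf x := hox ▸ hm
  set u := x ^ (orderOf x / m) with hu
  have hord : orderOf u = m := orderOf_pow_orderOf_div (by omega) hmdvd
  set g := (u : K) with hg
  have hog : orderOf g = m := by rw [hg, orderOf_units, hord]
  have hm0 : m ≠ 0 := by
    intro h; rw [h] at hm; exact absurd (Nat.eq_zero_of_zero_dvd hm) (by omega)
  -- norm is 1
  have hgm : g ^ m = 1 := by rw [← hog]; exact pow_orderOf_eq_one g
  have hnorm : Algebra.norm F g = 1 := by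
    have hne : Algebra.norm F g ≠ 0 := by
      intro h
      have : g ≠ 0 := Units.ne_zero u
      exact this (by rwa [Algebra.norm_eq_zero_iff] at h)
    have h1 : (Algebra.norm F g) ^ m = 1 := by rw [← map_pow, hgm, _root_.map_one]
    have h2 : (Algebra.norm F g) ^ (q - 1) = 1 := FiniteField.pow_card_sub_one_eq_one _ hne
    have d1 : orderOf (Algebra.norm F g) ∣ m := orderOf_dvd_of_pow_eq_one h1
    have d2 : orderOf (Algebra.norm F g) ∣ q - 1 := orderOf_dvd_of_pow_eq_one h2
    have : orderOf (Algebra.norm F g) ∣ 1 := hcop ▸ Nat.dvd_gcd d1 d2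
    rw [← orderOf_eq_one_iff]
    exact Nat.dvd_one.mp this
  -- the matrix embedding
  have e : Fin d ⊕ Fin (4 - d) ≃ Fin 4 := finSumFinEquiv.trans (finCongr (by omega))
  set Φ : K →* Matrix (Fin 4) (Fin 4) F :=
    { toFun := fun y => (Matrix.reindexAlgEquiv F F e)
        (Matrix.fromBlocks (Algebra.leftMulMatrix b y) 0 0 (1 : Matrix (Fin (4-d)) (Fin (4-d)) F)),
      map_one' := by
        rw [_root_.map_one (Algebra.leftMulMatrix b), Matrix.fromBlocks_one, _root_.map_one]
      map_mul' := by
        intro y z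
        rw [_root_.map_mul (Algebra.leftMulMatrix b), ← _root_.map_mul (Matrix.reindexAlgEquiv F F e)]
        congr 1
        rw [Matrix.fromBlocks_multiply]
        simp } with hΦ
  have hΦinj : Function.Injective Φ := by
    intro y z h
    apply Algebra.leftMulMatrix_injective b
    have h2 := (Matrix.reindexAlgEquiv F F e).injective h
    have h3 := congrArg Matrix.toBlocks₁₁ h2
    simpa [Matrix.toBlocks_fromBlocks₁₁] using h3
  have hdet : (Φ g).det = 1 := by
    rw [hΦ]
    simp only [MonoidHom.coe_mk, OneHom.coe_mk, Matrix.reindexAlgEquiv_apply,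
      Matrix.det_reindex_self, Matrix.det_fromBlocks_zero₂₁, Matrix.det_one, mul_one]
    rw [← Algebra.norm_eq_matrix_det b g, hnorm]
  refine ⟨⟨Φ g, hdet⟩, ?_⟩
  rw [← hog]
  apply orderOf_eq_orderOf_iff.mpr
  intro k
  erw [Subtype.ext_iff]
  change (Φ g) ^ k = (1 : Matrix (Fin 4) (Fin 4) F) ↔ g ^ k = 1
  rw [← map_pow Φ g k]
  constructor
  · intro h
    apply hΦinj
    rw [h, _root_.map_one]
  · intro h
    rw [h, _root_.map_one]

set_option maxHeartbeats 1000000 in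
theorem sylow_cyclic_SL4
    (q ℓ : ℕ) (hq : IsPrimePow q) (hℓ : ℓ.Prime) (hodd : Odd ℓ)
    (hdvd : ¬ ℓ ∣ q * (q ^ 2 - 1))
    (F : Type) [Field F] [Fintype F] [DecidableEq F] (hF : Fintype.card F = q)
    (P : Sylow ℓ (Matrix.SpecialLinearGroup (Fin 4) F)) :
    IsCyclic ↥(P : Subgroup (Matrix.SpecialLinearGroup (Fin 4) F)) := by
  classical
  haveI : Fact ℓ.Prime := ⟨hℓ⟩
  set G := Matrix.SpecialLinearGroup (Fin 4) F with hG
  set v := (Nat.card G).factorization ℓ with hv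
  have hq2 : 2 ≤ q := hq.two_le
  have hlq : ¬ ℓ ∣ q := fun h => hdvd (h.mul_right _)
  have hlq21 : ¬ ℓ ∣ q ^ 2 - 1 := fun h => hdvd (h.mul_left q)
  have hfac2 : q ^ 2 - 1 = (q - 1) * (q + 1) := by
    have : (q - 1) * (q + 1) = q * q + q - q - 1 := by rw [Nat.sub_mul]; ring_nf; omega
    rw [this, pow_two]; omega
  have hlq1 : ¬ ℓ ∣ q - 1 := fun h => hlq21 (hfac2 ▸ h.mul_right _)
  have hlq11 : ¬ ℓ ∣ q + 1 := fun h => hlq21 (hfac2 ▸ h.mul_left _)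
  -- coprimalities
  have cq : Nat.Coprime ℓ q := hℓ.coprime_iff_not_dvd.mpr hlq
  have cq1 : Nat.Coprime ℓ (q - 1) := hℓ.coprime_iff_not_dvd.mpr hlq1
  have cq21 : Nat.Coprime ℓ (q ^ 2 - 1) := hℓ.coprime_iff_not_dvd.mpr hlq21
  -- ℓ^v divides card G divides card GL
  have hdvd1 : ℓ ^ v ∣ Nat.card G := Nat.ordProj_dvd _ _
  have hSLGL : Nat.card G ∣ Nat.card (GL (Fin 4) F) :=
    Subgroup.card_dvd_of_injective Matrix.SpecialLinearGroup.toGL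
      (fun A B h => Subtype.ext (congrArg (fun (M : GL (Fin 4) F) => (M : Matrix (Fin 4) (Fin 4) F)) h))
  have hGL : Nat.card (GL (Fin 4) F) = q ^ 6 * ((q - 1) * ((q ^ 2 - 1) * ((q ^ 3 - 1) * (q ^ 4 - 1)))) := by
    rw [Matrix.card_GL_field, hF, Fin.prod_univ_four]
    have v0 : ((0 : Fin 4) : ℕ) = 0 := rfl
    have v1 : ((1 : Fin 4) : ℕ) = 1 := rfl
    have v2 : ((2 : Fin 4) : ℕ) = 2 := rfl
    have v3 : ((3 : Fin 4) : ℕ) = 3 := rfl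
    rw [v0, v1, v2, v3]
    have e0 : q ^ 4 - q ^ 0 = 1 * (q ^ 4 - 1) := by norm_num
    have e1 : q ^ 4 - q ^ 1 = q ^ 1 * (q ^ 3 - 1) := by
      rw [Nat.mul_sub, ← pow_add]; norm_num
    have e2 : q ^ 4 - q ^ 2 = q ^ 2 * (q ^ 2 - 1) := by
      rw [Nat.mul_sub, ← pow_add]; norm_num
    have e3 : q ^ 4 - q ^ 3 = q ^ 3 * (q - 1) := by
      rw [Nat.mul_sub, mul_one, ← pow_succ]
    rw [e0, e1, e2, e3]
    ring
  have hkey : ℓ ^ v ∣ (q ^ 3 - 1) * (q ^ 4 - 1) := by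
    have h := hdvd1.trans hSLGL
    rw [hGL] at h
    have c6 : Nat.Coprime (ℓ ^ v) (q ^ 6) := (cq.pow_right 6).pow_left v
    have h1 := (Nat.Coprime.dvd_of_dvd_mul_left c6 h)
    have h2 := Nat.Coprime.dvd_of_dvd_mul_left ((cq1.pow_left v)) h1
    exact Nat.Coprime.dvd_of_dvd_mul_left (cq21.pow_left v) h2
  have hfac4 : q ^ 4 - 1 = (q ^ 2 - 1) * (q ^ 2 + 1) := by
    rw [Nat.sub_mul, Nat.mul_add]
    have : q ^ 2 * q ^ 2 = q ^ 4 := by ring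
    omega
  -- find d
  obtain ⟨d, hd0, hd4, hdv⟩ : ∃ d, d ≠ 0 ∧ d ≤ 4 ∧ ℓ ^ v ∣ q ^ d - 1 := by
    by_cases hc : ℓ ∣ q ^ 3 - 1
    · refine ⟨3, by norm_num, by norm_num, ?_⟩
      have hc2 : ¬ ℓ ∣ q ^ 2 + 1 := by
        intro h2
        apply hlq1
        have ha : ℓ ∣ q ^ 4 - 1 := hfac4 ▸ h2.mul_left _
        have hb : ℓ ∣ q ^ 4 - q := by
          have : q ^ 4 - q = q * (q ^ 3 - 1) := by rw [Nat.mul_sub]; ring_nf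
          exact this ▸ hc.mul_left q
        have h4 : q ≤ q ^ 4 := Nat.le_self_pow (by norm_num) q
        have heq : (q ^ 4 - 1) - (q ^ 4 - q) = q - 1 := by omega
        exact heq ▸ Nat.dvd_sub ha hb
      have c41 : Nat.Coprime (ℓ ^ v) (q ^ 4 - 1) := by
        rw [hfac4]
        exact ((cq21.mul_right (hℓ.coprime_iff_not_dvd.mpr hc2))).pow_left v
      exact Nat.Coprime.dvd_of_dvd_mul_right c41 hkey
    · refine ⟨4, by norm_num, by norm_num, ?_⟩
      exact Nat.Coprime.dvd_of_dvd_mul_left ((hℓ.coprime_iff_not_dvd.mpr hc).pow_left v) hkey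
  -- construct element of order ℓ ^ v
  obtain ⟨M, hM⟩ := exists_SL4_elem F (m := ℓ ^ v) hd0 hd4 (by rw [hF]; exact hdv)
    (by rw [hF]; exact (cq1.pow_left v))
  have hcardzp : Nat.card (Subgroup.zpowers M) = ℓ ^ v := by rw [Nat.card_zpowers, hM]
  let Q : Sylow ℓ G := Sylow.ofCard (Subgroup.zpowers M) hcardzp
  haveI hQcyc : IsCyclic (Subgroup.zpowers M) := by
    refine ⟨⟨M, Subgroup.mem_zpowers M⟩, ?_⟩
    rintro ⟨y, hy⟩
    obtain ⟨k, hk⟩ := hy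
    exact ⟨k, Subtype.ext (by rw [SubgroupClass.coe_zpow]; exact hk)⟩
  haveI : IsCyclic ↥(Q : Subgroup G) := hQcyc
  exact isCyclic_of_surjective _ (Sylow.equiv Q P).surjective
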